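/- Let X be a stochastic process on a set Ω indexed by a time set T (either ℕ or [0,∞)) with values in a measurable space (E, ℰ), and let S be a stopping time of the natural filtration F^X of X. If A ∈ F^X_S, then for all ω, ω' ∈ Ω: if X_t(ω) = X_t(ω') for every t ∈ T with t ≤ S(ω) ∧ S(ω'), then S(ω) = S(ω'), the stopped paths X^S(ω) and X^S(ω') coincide, and the indicator 1_A takes the same value at ω and ω'. -/

import Mathlib

open MeasureTheory Set

variable {Ω E T : Type*}

/-- The natural filtration of a process `X : T → Ω → E`. -/
def natFilt [LinearOrder T] [mE : MeasurableSpace E] (X : T → Ω → E) (t : T) :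
    MeasurableSpace Ω :=
  ⨆ s, ⨆ _ : s ≤ t, mE.comap (X s)

/-- The process `X` stopped at the random time `S : Ω → T ∪ {∞}`. -/
def stopped [LinearOrder T] (X : T → Ω → E) (S : Ω → WithTop T) (t : T) (ω : Ω) : E :=
  X (min t ((S ω).untopD t)) ω

/-- The σ-algebra of sets that cannot distinguish `ω` from `ω'`. -/
def agreeAlg (ω ω' : Ω) : MeasurableSpace Ω where
  MeasurableSet' A := ω ∈ A ↔ ω' ∈ A
  measurableSet_empty := Iff.rfl
  measurableSet_compl _ hA := not_congr hA
  measurableSet_iUnion f hf := by simp only [mem_iUnion]; exact exists_congr hf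

lemma natFilt_le_agree [LinearOrder T] [MeasurableSpace E] (X : T → Ω → E) (t : T)
    (ω ω' : Ω) (h : ∀ s, s ≤ t → X s ω = X s ω') : natFilt X t ≤ agreeAlg ω ω' := by
  refine iSup_le fun s => iSup_le fun hs A hA => ?_
  obtain ⟨B, -, rfl⟩ := hA
  show X s ω ∈ B ↔ X s ω' ∈ B
  rw [h s hs]

lemma iSup_natFilt_le_agree [LinearOrder T] [MeasurableSpace E] (X : T → Ω → E)
    (ω ω' : Ω) (h : ∀ s, X s ω = X s ω') : (⨆ t, natFilt X t) ≤ agreeAlg ω ω' :=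
  iSup_le fun t => natFilt_le_agree X t ω ω' fun s _ => h s

/-- **Key Lemma.** If `X` is a process with time set `T` (`ℕ` or `[0,∞)`), `S` a stopping time
of its natural filtration, and `A ∈ F^X_S`, then whenever the paths of `X` at `ω` and `ω'`
agree up to time `S ω ⊓ S ω'`, we have `S ω = S ω'`, the stopped paths agree, and `1_A`
takes the same value at `ω` and `ω'`. -/
theorem stmt_0 [LinearOrder T] [MeasurableSpace E]
    (hT : Nonempty (T ≃o ℕ) ∨ Nonempty (T ≃o NNReal))
    (X : T → Ω → E) (S : Ω → WithTop T)
    (hS : ∀ t : T, MeasurableSet[natFilt X t] {ω | S ω ≤ (t : WithTop T)})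
    (A : Set Ω)
    (hAinf : MeasurableSet[⨆ t, natFilt X t] A)
    (hA : ∀ t : T, MeasurableSet[natFilt X t] (A ∩ {ω | S ω ≤ (t : WithTop T)}))
    (ω ω' : Ω)
    (h : ∀ t : T, (t : WithTop T) ≤ S ω ⊓ S ω' → X t ω = X t ω') :
    S ω = S ω' ∧ (∀ t : T, stopped X S t ω = stopped X S t ω') ∧ (ω ∈ A ↔ ω' ∈ A) := by
  -- symmetric step: S a < S b is impossible
  have step : ∀ a b : Ω, (∀ t : T, (t : WithTop T) ≤ S a ⊓ S b → X t a = X t b) →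
      ¬ S a < S b := by
    intro a b hab hlt
    obtain ⟨t₀, ht₀⟩ : ∃ t₀ : T, S a = (t₀ : WithTop T) := by
      cases hSa : S a with
      | top => rw [hSa] at hlt; exact absurd hlt (not_top_lt)
      | coe t => exact ⟨t, rfl⟩
    have hinf : S a ⊓ S b = (t₀ : WithTop T) := by
      rw [inf_eq_left.2 hlt.le, ht₀]
    have hagree : ∀ s, s ≤ t₀ → X s a = X s b := fun s hs =>
      hab s (hinf ▸ WithTop.coe_le_coe.2 hs)
    have := natFilt_le_agree X t₀ a b hagree _ (hS t₀)
    have hb : S b ≤ (t₀ : WithTop T) := this.1 (le_of_eq ht₀)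
    exact absurd (hb.trans_lt (ht₀ ▸ hlt)) (lt_irrefl _)
  have h' : ∀ t : T, (t : WithTop T) ≤ S ω' ⊓ S ω → X t ω' = X t ω := by
    intro t ht
    exact (h t (by rwa [inf_comm])).symm
  have hSS : S ω = S ω' :=
    le_antisymm (not_lt.1 (step ω' ω h')) (not_lt.1 (step ω ω' h))
  refine ⟨hSS, ?_, ?_⟩
  · intro t
    unfold stopped
    rw [hSS]
    apply h
    rw [inf_eq_right.2 (le_of_eq hSS.symm) ]
    cases hS' : S ω' with
    | top => exact le_top
    | coe s =>
      simp only [WithTop.untopD_coe]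
      exact WithTop.coe_le_coe.2 (min_le_right t s)
  · cases hS0 : S ω with
    | top =>
      have hS0' : S ω' = ⊤ := hSS ▸ hS0
      have hall : ∀ s, X s ω = X s ω' := fun s =>
        h s (by rw [hS0, hS0']; exact le_top)
      exact iSup_natFilt_le_agree X ω ω' hall _ hAinf
    | coe t₀ =>
      have hS0' : S ω' = (t₀ : WithTop T) := hSS ▸ hS0
      have hagree : ∀ s, s ≤ t₀ → X s ω = X s ω' := fun s hs =>
        h s (by rw [hS0, hS0', inf_idem]; exact WithTop.coe_le_coe.2 hs)
      have := natFilt_le_agree X t₀ ω ω' hagree _ (hA t₀)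
      constructor
      · intro hω; exact (this.1 ⟨hω, le_of_eq hS0⟩).1
      · intro hω; exact (this.2 ⟨hω, le_of_eq hS0'⟩).1
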